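/- Let (W,S) be a Coxeter system whose group W is finite. For all u, w ∈ W there exists v ∈ W with v ≤ u, v ≤ w and al(v,u) + al(v,w) = ℓ′(u·w⁻¹). -/

import Mathlib

/-- Directed edge of the Bruhat graph of a Coxeter system. -/
def edge {B W : Type*} [Group W] {M : CoxeterMatrix B} (cs : CoxeterSystem M W)
    (x y : W) : Prop :=
  (∃ t : W, cs.IsReflection t ∧ y = t * x) ∧ cs.length x < cs.length y

/-- The Bruhat order: `u ≤ w` iff `u = w` or there is a directed path from `u` to `w`. -/
def bruhatLe {B W : Type*} [Group W] {M : CoxeterMatrix B} (cs : CoxeterSystem M W)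
    (u w : W) : Prop :=
  Relation.ReflTransGen (edge cs) u w

/-- `reachesIn r m u w` : there is a directed path with `m` edges from `u` to `w`. -/
def reachesIn {α : Type*} (r : α → α → Prop) : ℕ → α → α → Prop
  | 0, u, w => u = w
  | (m+1), u, w => ∃ v, r u v ∧ reachesIn r m v w

/-- `al u w` : the minimum number of edges of a directed path from `u` to `w`
in the Bruhat graph. -/
noncomputable def al {B W : Type*} [Group W] {M : CoxeterMatrix B} (cs : CoxeterSystem M W)
    (u w : W) : ℕ :=
  sInf {m | reachesIn (edge cs) m u w}

/-- The absolute length: least `k` such that `v` is a product of `k` reflections. -/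
noncomputable def absLen {B W : Type*} [Group W] {M : CoxeterMatrix B} (cs : CoxeterSystem M W)
    (v : W) : ℕ :=
  sInf {k | ∃ l : List W, l.length = k ∧ (∀ t ∈ l, cs.IsReflection t) ∧ l.prod = v}


namespace StmtThree
open CoxeterSystem List
open scoped Classical

variable {B : Type*} {W : Type*} [Group W] {M : CoxeterMatrix B} (cs : CoxeterSystem M W)

/-- The function underlying the parity ("reflection/root") permutation representation. -/
noncomputable def etaFun (i : B) : W × ZMod 2 → W × ZMod 2 :=
  fun p => (cs.simple i * p.1 * cs.simple i, p.2 + if p.1 = cs.simple i then 1 else 0)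

lemma simple_conj_conj (i : B) (t : W) :
    cs.simple i * (cs.simple i * t * cs.simple i) * cs.simple i = t := by
  calc cs.simple i * (cs.simple i * t * cs.simple i) * cs.simple i
      = (cs.simple i * cs.simple i) * t * (cs.simple i * cs.simple i) := by group
    _ = t := by rw [cs.simple_mul_simple_self]; group

lemma simple_conj_eq_simple_iff (i : B) (t : W) :
    cs.simple i * t * cs.simple i = cs.simple i ↔ t = cs.simple i := by
  constructor
  · intro hc
    have := congrArg (fun x => cs.simple i * x * cs.simple i) hc
    rw [simple_conj_conj] at this
    rw [this, cs.simple_mul_simple_self, one_mul]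
  · intro h
    subst h
    rw [cs.simple_mul_simple_self, one_mul]

lemma etaFun_involutive (i : B) : Function.Involutive (etaFun cs i) := by
  intro p
  obtain ⟨t, z⟩ := p
  simp only [etaFun]
  refine Prod.ext (simple_conj_conj cs i t) ?_
  simp only [simple_conj_eq_simple_iff]
  by_cases h : t = cs.simple i
  · rw [if_pos h]
    have : ∀ x : ZMod 2, x + 1 + 1 = x := by decide
    exact this z
  · rw [if_neg h]
    simp

/-- The parity permutation for a single generator. -/
noncomputable def eta (i : B) : Equiv.Perm (W × ZMod 2) := (etaFun_involutive cs i).toPerm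

lemma eta_apply (i : B) (t : W) (z : ZMod 2) :
    eta cs i (t, z) = (cs.simple i * t * cs.simple i, z + if t = cs.simple i then 1 else 0) :=
  rfl

end StmtThree

namespace StmtThree

section AbstractBraid

variable {G : Type*} [Group G]

lemma conj_eq_iff (a t y : G) : a * t * a⁻¹ = y ↔ t = a⁻¹ * y * a := by
  constructor
  · intro h; subst h; group
  · intro h; subst h; group

lemma invol_conj_conj {y : G} (hy : y * y = 1) (Z : G) : y * (y * Z * y) * y = Z := by
  calc y * (y * Z * y) * y = (y * y) * Z * (y * y) := by group
    _ = Z := by rw [hy, one_mul, mul_one]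

lemma invol_conj_eq_iff {y : G} (hy : y * y = 1) (Z R : G) :
    y * Z * y = R ↔ Z = y * R * y := by
  constructor
  · intro h; rw [← h, invol_conj_conj hy]
  · intro h; rw [h, invol_conj_conj hy]

lemma y_mul_c_pow {c y : G} (h3 : y * c = c⁻¹ * y) (k : ℕ) :
    y * c ^ k = (c⁻¹) ^ k * y := by
  induction k with
  | zero => simp
  | succ k ih =>
    rw [pow_succ, ← mul_assoc, ih, mul_assoc, h3, ← mul_assoc, ← pow_succ]

lemma braid_cond_j {c y : G} (h3 : y * c = c⁻¹ * y) (k : ℕ) (t : G) :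
    (c ^ k * t * (c ^ k)⁻¹ = y) ↔ t = (c⁻¹) ^ (k + k) * y := by
  rw [conj_eq_iff]
  have : (c ^ k)⁻¹ * y * c ^ k = (c⁻¹) ^ (k + k) * y := by
    rw [mul_assoc, y_mul_c_pow h3, ← mul_assoc]
    group
  rw [this]

lemma braid_cond_i {c x y : G} (hy : y * y = 1) (h3 : y * c = c⁻¹ * y) (hx : x = c * y)
    (k : ℕ) (t : G) :
    (y * (c ^ k * t * (c ^ k)⁻¹) * y = x) ↔ t = (c⁻¹) ^ (k + k + 1) * y := by
  rw [hx, invol_conj_eq_iff hy, conj_eq_iff]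
  have h4 : y * (c * y) * y = c⁻¹ * y := by
    calc y * (c * y) * y = (y * c) * (y * y) := by group
      _ = c⁻¹ * y := by rw [hy, mul_one, h3]
  rw [h4]
  have : (c ^ k)⁻¹ * (c⁻¹ * y) * c ^ k = (c⁻¹) ^ (k + k + 1) * y := by
    rw [mul_assoc (c ^ k)⁻¹, mul_assoc c⁻¹, y_mul_c_pow h3, ← mul_assoc, ← mul_assoc]
    group
  rw [this]

lemma braid_fst {c x y : G} (hy : y * y = 1) (h3 : y * c = c⁻¹ * y) (hx : x = c * y)
    (k : ℕ) (t : G) :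
    x * (y * (c ^ k * t * (c ^ k)⁻¹) * y) * x
      = c ^ (k + 1) * t * (c ^ (k + 1))⁻¹ := by
  have hycy : y * c * y = c⁻¹ := by
    rw [h3, mul_assoc, hy, mul_one]
  rw [hx]
  calc (c * y) * (y * (c ^ k * t * (c ^ k)⁻¹) * y) * (c * y)
      = c * (y * y) * (c ^ k * t * (c ^ k)⁻¹) * (y * c * y) := by group
    _ = c * (c ^ k * t * (c ^ k)⁻¹) * c⁻¹ := by rw [hy, hycy, mul_one]
    _ = c ^ (k + 1) * t * (c ^ (k + 1))⁻¹ := by group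

end AbstractBraid

open CoxeterSystem List
open scoped Classical

variable {B : Type*} {W : Type*} [Group W] {M : CoxeterMatrix B} (cs : CoxeterSystem M W)

lemma simple_h3 (i j : B) :
    cs.simple j * (cs.simple i * cs.simple j) = (cs.simple i * cs.simple j)⁻¹ * cs.simple j := by
  rw [mul_inv_rev, cs.inv_simple, cs.inv_simple]
  group

lemma simple_x_eq (i j : B) : cs.simple i = (cs.simple i * cs.simple j) * cs.simple j := by
  rw [mul_assoc, cs.simple_mul_simple_self, mul_one]

lemma eta_pow_apply (i j : B) (k : ℕ) (t : W) (z : ZMod 2) :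
    ((eta cs i * eta cs j) ^ k) (t, z) =
      ((cs.simple i * cs.simple j) ^ k * t * ((cs.simple i * cs.simple j) ^ k)⁻¹,
        z + ∑ n ∈ Finset.range (k + k),
          (if t = ((cs.simple i * cs.simple j)⁻¹) ^ n * cs.simple j then 1 else 0)) := by
  have hy : cs.simple j * cs.simple j = 1 := cs.simple_mul_simple_self j
  have h3 := simple_h3 cs i j
  induction k with
  | zero => simp
  | succ k ih =>
    rw [pow_succ', Equiv.Perm.mul_apply, ih, Equiv.Perm.mul_apply, eta_apply, eta_apply]
    rw [if_congr (braid_cond_j h3 k t) rfl rfl,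
      if_congr (braid_cond_i hy h3 (simple_x_eq cs i j) k t) rfl rfl,
      braid_fst hy h3 (simple_x_eq cs i j) k t]
    refine Prod.ext rfl ?_
    dsimp only
    have hn : k + 1 + (k + 1) = (k + k) + 1 + 1 := by omega
    rw [hn, Finset.sum_range_succ, Finset.sum_range_succ]
    ring

end StmtThree

namespace StmtThree
open CoxeterSystem List
open scoped Classical

variable {B : Type*} {W : Type*} [Group W] {M : CoxeterMatrix B} (cs : CoxeterSystem M W)

lemma sum_range_double_cancel (m : ℕ) (f : ℕ → ZMod 2) (hf : ∀ n, f (m + n) = f n) :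
    ∑ n ∈ Finset.range (m + m), f n = 0 := by
  rw [Finset.range_eq_Ico, ← Finset.sum_Ico_consecutive _ (Nat.zero_le m) (Nat.le_add_left m m)]
  nth_rewrite 2 [Finset.sum_Ico_eq_sum_range]
  have h1 : m + m - m = m := by omega
  rw [h1, ← Finset.range_eq_Ico]
  have h2 : ∑ n ∈ Finset.range m, f (m + n) = ∑ n ∈ Finset.range m, f n :=
    Finset.sum_congr rfl (fun n _ => hf n)
  rw [h2]
  exact (by decide : ∀ x : ZMod 2, x + x = 0) _

lemma eta_liftable : M.IsLiftable (fun i => eta cs i) := by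
  intro i j
  apply Equiv.ext
  intro p
  obtain ⟨t, z⟩ := p
  show ((eta cs i * eta cs j) ^ M i j) (t, z) = (t, z)
  rw [eta_pow_apply]
  have hc : (cs.simple i * cs.simple j) ^ M i j = 1 := cs.simple_mul_simple_pow i j
  have hper : ∀ n : ℕ, ((cs.simple i * cs.simple j)⁻¹) ^ (M i j + n)
      = ((cs.simple i * cs.simple j)⁻¹) ^ n := by
    intro n
    rw [pow_add, inv_pow, hc, inv_one, one_mul]
  have hsum : ∑ n ∈ Finset.range (M i j + M i j),
      (if t = ((cs.simple i * cs.simple j)⁻¹) ^ n * cs.simple j then 1 else 0) = (0 : ZMod 2) := by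
    exact sum_range_double_cancel (M i j) _ (fun n => by rw [hper n])
  rw [hsum, hc]
  refine Prod.ext ?_ ?_
  · simp
  · simp

/-- The parity ("reflection") representation of the Coxeter group. -/
noncomputable def phi : W →* Equiv.Perm (W × ZMod 2) :=
  cs.lift ⟨fun i => eta cs i, eta_liftable cs⟩

lemma phi_simple (i : B) : phi cs (cs.simple i) = eta cs i :=
  cs.lift_apply_simple (eta_liftable cs) i

/-- Parity of the number of occurrences of `t` in the (right) inversion sequence of any word
for `w`. -/
noncomputable def nn (w t : W) : ZMod 2 := ((phi cs w) (t, 0)).2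

lemma phi_apply_eq (w t : W) (z : ZMod 2) :
    phi cs w (t, z) = (w * t * w⁻¹, z + nn cs w t) := by
  induction w using cs.simple_induction_left generalizing t z with
  | one =>
    simp only [nn, map_one, Equiv.Perm.one_apply]
    refine Prod.ext ?_ ?_ <;> simp
  | mul_simple_left w i ihw =>
    rw [map_mul, Equiv.Perm.mul_apply, ihw, phi_simple, eta_apply]
    have hnn : nn cs (cs.simple i * w) t
        = nn cs w t + (if w * t * w⁻¹ = cs.simple i then 1 else 0) := by
      unfold nn
      rw [map_mul, Equiv.Perm.mul_apply, ihw, phi_simple, eta_apply]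
    refine Prod.ext ?_ ?_
    · dsimp only
      rw [mul_inv_rev, cs.inv_simple]
      group
    · dsimp only
      rw [hnn]
      ring

lemma nn_mul (x y t : W) :
    nn cs (x * y) t = nn cs y t + nn cs x (y * t * y⁻¹) := by
  have h1 : phi cs (x * y) (t, 0)
      = (x * (y * t * y⁻¹) * x⁻¹, (0 + nn cs y t) + nn cs x (y * t * y⁻¹)) := by
    rw [map_mul, Equiv.Perm.mul_apply, phi_apply_eq cs y t 0, phi_apply_eq cs x]
  have h2 := congrArg Prod.snd (phi_apply_eq cs (x * y) t 0)
  rw [h1] at h2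
  dsimp only at h2
  rw [zero_add, zero_add] at h2
  exact h2.symm

lemma nn_one (t : W) : nn cs 1 t = 0 := by
  simp [nn]

lemma nn_simple (i : B) (t : W) :
    nn cs (cs.simple i) t = if t = cs.simple i then 1 else 0 := by
  unfold nn
  rw [phi_simple, eta_apply]
  dsimp only
  rw [zero_add]

end StmtThree

namespace StmtThree
open CoxeterSystem List
open scoped Classical

variable {B : Type*} {W : Type*} [Group W] {M : CoxeterMatrix B} (cs : CoxeterSystem M W)

lemma nn_inv (w t : W) : nn cs w⁻¹ t = nn cs w (w⁻¹ * t * w) := by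
  have h := nn_mul cs w w⁻¹ t
  rw [mul_inv_cancel, nn_one] at h
  have hd : ∀ a b : ZMod 2, 0 = a + b → a = b := by decide
  have := hd _ _ h
  rw [this]
  congr 1
  rw [inv_inv]

lemma nn_refl_self {t : W} (ht : cs.IsReflection t) : nn cs t t = 1 := by
  obtain ⟨w, i, rfl⟩ := ht
  set t := w * cs.simple i * w⁻¹ with htdef
  have e1 : nn cs ((w * cs.simple i) * w⁻¹) t
      = nn cs w⁻¹ t + nn cs (w * cs.simple i) (w⁻¹ * t * (w⁻¹)⁻¹) := nn_mul cs _ _ _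
  have hconj : w⁻¹ * t * (w⁻¹)⁻¹ = cs.simple i := by
    rw [htdef]; group
  have hconj' : w⁻¹ * t * w = cs.simple i := by
    rw [htdef]; group
  rw [hconj] at e1
  have e2 : nn cs (w * cs.simple i) (cs.simple i)
      = nn cs (cs.simple i) (cs.simple i)
        + nn cs w (cs.simple i * cs.simple i * (cs.simple i)⁻¹) := nn_mul cs _ _ _
  have hsss : cs.simple i * cs.simple i * (cs.simple i)⁻¹ = cs.simple i := by
    rw [cs.simple_mul_simple_self, one_mul, cs.inv_simple]
  rw [hsss, nn_simple, if_pos rfl] at e2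
  have e4 : nn cs w⁻¹ t = nn cs w (cs.simple i) := by
    rw [nn_inv, hconj']
  have hmul : (w * cs.simple i) * w⁻¹ = t := by rw [htdef]
  rw [hmul, e2, e4] at e1
  rw [e1]
  exact (by decide : ∀ a : ZMod 2, a + (1 + a) = 1) _

lemma mem_rightInvSeq_of_nn (ω : List B) (t : W) (h : nn cs (cs.wordProd ω) t = 1) :
    t ∈ cs.rightInvSeq ω := by
  induction ω with
  | nil =>
    rw [cs.wordProd_nil, nn_one] at h
    exact absurd h (by decide)
  | cons i ω ih =>
    rw [cs.wordProd_cons, nn_mul, nn_simple] at h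
    have hcons : cs.rightInvSeq (i :: ω)
        = ((cs.wordProd ω)⁻¹ * cs.simple i * cs.wordProd ω) :: cs.rightInvSeq ω := rfl
    rcases (by decide : ∀ a b : ZMod 2, a + b = 1 → a = 1 ∨ b = 1) _ _ h with h1 | h2
    · rw [hcons]
      exact List.mem_cons_of_mem _ (ih h1)
    · by_cases hc : cs.wordProd ω * t * (cs.wordProd ω)⁻¹ = cs.simple i
      · have : t = (cs.wordProd ω)⁻¹ * cs.simple i * cs.wordProd ω := by
          rw [← hc]; group
        rw [hcons, this]
        exact List.mem_cons_self
      · rw [if_neg hc] at h2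
        exact absurd h2 (by decide)

lemma length_mul_lt_of_nn {w t : W} (h : nn cs w t = 1) :
    cs.length (w * t) < cs.length w := by
  obtain ⟨ω, hred, hw⟩ := cs.exists_reduced_word' w
  have hmem : t ∈ cs.rightInvSeq ω := mem_rightInvSeq_of_nn cs ω t (by rwa [← hw])
  have := cs.isRightInversion_of_mem_rightInvSeq hred hmem
  rw [← hw] at this
  exact this.2

lemma nn_of_isRightInversion {w t : W} (ht : cs.IsReflection t)
    (h : cs.length (w * t) < cs.length w) : nn cs w t = 1 := by
  rcases (by decide : ∀ a : ZMod 2, a = 0 ∨ a = 1) (nn cs w t) with h0 | h1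
  · exfalso
    have hwt : nn cs (w * t) t = 1 := by
      rw [nn_mul]
      have : t * t * t⁻¹ = t := by rw [ht.mul_self, one_mul, ht.inv]
      rw [this, nn_refl_self cs ht, h0]
      decide
    have := length_mul_lt_of_nn cs hwt
    rw [mul_assoc, ht.mul_self, mul_one] at this
    omega
  · exact h1

/-- Strong exchange property (membership form): a right inversion of `w` appears in the right
inversion sequence of any word for `w`. -/
lemma mem_rightInvSeq_of_isRightInversion {w t : W} (ht : cs.IsReflection t)
    (h : cs.length (w * t) < cs.length w) {ω : List B} (hω : cs.wordProd ω = w) :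
    t ∈ cs.rightInvSeq ω := by
  apply mem_rightInvSeq_of_nn
  rw [hω]
  exact nn_of_isRightInversion cs ht h

end StmtThree

namespace StmtThree
open CoxeterSystem List
open scoped Classical

variable {B : Type*} {W : Type*} [Group W] {M : CoxeterMatrix B} (cs : CoxeterSystem M W)

lemma ris_getD_eraseIdx (ω : List B) {a b : ℕ} (hab : a < b) (hb : b < ω.length) :
    (cs.rightInvSeq (ω.eraseIdx a)).getD (b - 1) 1 = (cs.rightInvSeq ω).getD b 1 := by
  rw [cs.getD_rightInvSeq, cs.getD_rightInvSeq,
    (Nat.sub_add_cancel (by omega) : b - 1 + 1 = b), eraseIdx_eq_take_drop_succ,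
    drop_append, drop_of_length_le (by simp [hab.le]), length_take,
    drop_drop, nil_append, min_eq_left_of_lt (hab.trans hb), Nat.add_comm,
    ← add_assoc, Nat.sub_add_cancel (by omega), mul_left_inj, mul_right_inj]
  congr 2
  show (take a ω ++ drop (a + 1) ω)[b - 1]? = ω[b]?
  rw [getElem?_append_right (by simp [Nat.le_sub_one_of_lt hab]), getElem?_drop]
  congr
  show a + 1 + (b - 1 - List.length (take a ω)) = b
  rw [length_take]
  omega

lemma wordProd_double_erase (ω : List B) {a b : ℕ} (hab : a < b) (hb : b < ω.length) :
    cs.wordProd ω * ((cs.rightInvSeq ω).getD a 1) * ((cs.rightInvSeq ω).getD b 1)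
      = cs.wordProd ((ω.eraseIdx a).eraseIdx (b - 1)) := by
  rw [cs.wordProd_mul_getD_rightInvSeq, ← ris_getD_eraseIdx cs ω hab hb,
    cs.wordProd_mul_getD_rightInvSeq]

lemma claimE_right {y t r : W} (htr : t ≠ r)
    (h1 : cs.length (y * t) < cs.length y) (h2 : cs.length (y * r) < cs.length y)
    (ht : cs.IsReflection t) (hr : cs.IsReflection r) :
    cs.length (y * t * r) + 2 ≤ cs.length y ∨ cs.length (y * r * t) + 2 ≤ cs.length y := by
  obtain ⟨ω, hred, hw⟩ := cs.exists_reduced_word' y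
  have hlen : (cs.rightInvSeq ω).length = ω.length := cs.length_rightInvSeq ω
  have hmemt : t ∈ cs.rightInvSeq ω :=
    mem_rightInvSeq_of_isRightInversion cs ht h1 hw.symm
  have hmemr : r ∈ cs.rightInvSeq ω :=
    mem_rightInvSeq_of_isRightInversion cs hr h2 hw.symm
  obtain ⟨a, ha, hta⟩ := List.mem_iff_getElem.mp hmemt
  obtain ⟨b, hbb, hrb⟩ := List.mem_iff_getElem.mp hmemr
  have hga : (cs.rightInvSeq ω).getD a 1 = t := by rw [List.getD_eq_getElem _ _ ha, hta]
  have hgb : (cs.rightInvSeq ω).getD b 1 = r := by rw [List.getD_eq_getElem _ _ hbb, hrb]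
  have hane : a ≠ b := by
    intro hEq
    rw [← hga, ← hgb, hEq] at htr
    exact htr rfl
  have hwlen : cs.length y = ω.length := by rw [hw]; exact hred
  rcases lt_or_gt_of_ne hane with hab | hba
  · left
    have hb' : b < ω.length := by omega
    have := wordProd_double_erase cs ω hab hb'
    rw [hga, hgb, ← hw] at this
    rw [this]
    have hL1 : ((ω.eraseIdx a).eraseIdx (b - 1)).length + 1 = (ω.eraseIdx a).length := by
      apply List.length_eraseIdx_add_one
      have := List.length_eraseIdx_add_one (show a < ω.length by omega)
      omega
    have hL2 : (ω.eraseIdx a).length + 1 = ω.length :=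
      List.length_eraseIdx_add_one (by omega)
    have := cs.length_wordProd_le ((ω.eraseIdx a).eraseIdx (b - 1))
    omega
  · right
    have ha' : a < ω.length := by rwa [hlen] at ha
    have := wordProd_double_erase cs ω hba ha'
    rw [hga, hgb, ← hw] at this
    rw [this]
    have hL1 : ((ω.eraseIdx b).eraseIdx (a - 1)).length + 1 = (ω.eraseIdx b).length := by
      apply List.length_eraseIdx_add_one
      have := List.length_eraseIdx_add_one (show b < ω.length by omega)
      omega
    have hL2 : (ω.eraseIdx b).length + 1 = ω.length :=
      List.length_eraseIdx_add_one (by omega)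
    have := cs.length_wordProd_le ((ω.eraseIdx b).eraseIdx (a - 1))
    omega

/-- Peak exchange: if `t ≠ r` are two reflections both taking `y` down (on the left), then
one of `t*r*y`, `r*t*y` is much shorter than `y`. -/
lemma claimE {y t r : W} (htr : t ≠ r)
    (h1 : cs.length (t * y) < cs.length y) (h2 : cs.length (r * y) < cs.length y)
    (ht : cs.IsReflection t) (hr : cs.IsReflection r) :
    cs.length (t * r * y) + 2 ≤ cs.length y ∨ cs.length (r * t * y) + 2 ≤ cs.length y := by
  have ht' : cs.IsReflection (y⁻¹ * t * y) := by
    have := ht.conj y⁻¹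
    rwa [inv_inv] at this
  have hr' : cs.IsReflection (y⁻¹ * r * y) := by
    have := hr.conj y⁻¹
    rwa [inv_inv] at this
  have htr' : y⁻¹ * t * y ≠ y⁻¹ * r * y := by
    intro hEq
    apply htr
    have := congrArg (fun g => y * g * y⁻¹) hEq
    simpa only [show ∀ u : W, y * (y⁻¹ * u * y) * y⁻¹ = u from fun u => by group] using this
  have e1 : y * (y⁻¹ * t * y) = t * y := by group
  have e2 : y * (y⁻¹ * r * y) = r * y := by group
  have e3 : y * (y⁻¹ * t * y) * (y⁻¹ * r * y) = t * r * y := by group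
  have e4 : y * (y⁻¹ * r * y) * (y⁻¹ * t * y) = r * t * y := by group
  have := claimE_right cs htr' (by rw [e1]; exact h1) (by rw [e2]; exact h2) ht' hr'
  rwa [e3, e4] at this

end StmtThree


namespace StmtThree
open CoxeterSystem List
open scoped Classical

variable {B : Type*} {W : Type*} [Group W] {M : CoxeterMatrix B} (cs : CoxeterSystem M W)

/-- Vertices of the path determined by a list of reflections, ending at `w`. -/
def vert (l : List W) (w : W) (j : ℕ) : W := (l.drop j).prod * w

lemma vert_length (l : List W) (w : W) : vert l w l.length = w := by
  simp [vert]

lemma vert_succ (l : List W) (w : W) {j : ℕ} (hj : j < l.length) :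
    vert l w j = l[j] * vert l w (j + 1) := by
  unfold vert
  rw [List.drop_eq_getElem_cons hj, List.prod_cons, mul_assoc]

/-- The total length potential of a path. -/
noncomputable def pot (l : List W) (w : W) : ℕ :=
  ∑ j ∈ Finset.range (l.length + 1), cs.length (vert l w j)

lemma reachesIn_snoc {α : Type*} {r : α → α → Prop} :
    ∀ {m : ℕ} {x y z : α}, reachesIn r m x y → r y z → reachesIn r (m + 1) x z := by
  intro m
  induction m with
  | zero =>
    intro x y z hxy hyz
    exact ⟨z, hxy ▸ hyz, rfl⟩
  | succ m ih =>
    intro x y z hxy hyz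
    obtain ⟨v, hxv, hvy⟩ := hxy
    exact ⟨v, hxv, ih hvy hyz⟩

lemma reachesIn_reflTransGen {α : Type*} {r : α → α → Prop} :
    ∀ {m : ℕ} {x y : α}, reachesIn r m x y → Relation.ReflTransGen r x y := by
  intro m
  induction m with
  | zero => intro x y h; exact h ▸ Relation.ReflTransGen.refl
  | succ m ih =>
    intro x y h
    obtain ⟨v, hxv, hvy⟩ := h
    exact Relation.ReflTransGen.head hxv (ih hvy)

lemma exists_reachesIn_of_reflTransGen {α : Type*} {r : α → α → Prop} {x y : α}
    (h : Relation.ReflTransGen r x y) : ∃ m, reachesIn r m x y := by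
  induction h with
  | refl => exact ⟨0, rfl⟩
  | tail _ hyz ih =>
    obtain ⟨m, hm⟩ := ih
    exact ⟨m + 1, reachesIn_snoc hm hyz⟩

lemma reachesIn_factor :
    ∀ {m : ℕ} {x y : W}, reachesIn (edge cs) m x y →
      ∃ l : List W, l.length = m ∧ (∀ t ∈ l, cs.IsReflection t) ∧ y = l.prod * x := by
  intro m
  induction m with
  | zero =>
    intro x y h
    have hxy : x = y := h
    subst hxy
    exact ⟨[], rfl, by simp, by simp⟩
  | succ m ih =>
    intro x y h
    obtain ⟨v, ⟨⟨t, htr, hv⟩, _⟩, hrest⟩ := h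
    obtain ⟨l, hlen, hrefl, hy⟩ := ih hrest
    refine ⟨l ++ [t], by simp [hlen], ?_, ?_⟩
    · intro t' ht'
      rcases List.mem_append.mp ht' with h' | h'
      · exact hrefl t' h'
      · rw [List.mem_singleton.mp h']; exact htr
    · rw [hy, hv, List.prod_append, List.prod_singleton, mul_assoc]

lemma prod_reverse_of_refl :
    ∀ {l : List W}, (∀ t ∈ l, cs.IsReflection t) → l.reverse.prod = l.prod⁻¹ := by
  intro l
  induction l with
  | nil => simp
  | cons t l ih =>
    intro h
    rw [List.reverse_cons, List.prod_append, List.prod_singleton, List.prod_cons,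
      ih (fun t' ht' => h t' (List.mem_cons_of_mem _ ht')), mul_inv_rev,
      (h t List.mem_cons_self).inv]

lemma absLen_exists_list (x : W) :
    ∃ l : List W, l.length = absLen cs x ∧ (∀ t ∈ l, cs.IsReflection t) ∧ l.prod = x := by
  have hne : {k | ∃ l : List W, l.length = k ∧ (∀ t ∈ l, cs.IsReflection t) ∧ l.prod = x}.Nonempty := by
    obtain ⟨ω, _, hω⟩ := cs.exists_reduced_word' x
    refine ⟨(ω.map cs.simple).length, ω.map cs.simple, rfl, ?_, ?_⟩
    · intro t ht
      obtain ⟨i, _, rfl⟩ := List.mem_map.mp ht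
      exact cs.isReflection_simple i
    · rw [hω]; rfl
  exact Nat.sInf_mem hne

lemma absLen_le (x : W) {l : List W} (hrefl : ∀ t ∈ l, cs.IsReflection t) (hp : l.prod = x) :
    absLen cs x ≤ l.length :=
  Nat.sInf_le ⟨l, rfl, hrefl, hp⟩

lemma al_le {v u : W} {m : ℕ} (h : reachesIn (edge cs) m v u) : al cs v u ≤ m :=
  Nat.sInf_le h

lemma reachesIn_al {v u : W} (h : bruhatLe cs v u) : reachesIn (edge cs) (al cs v u) v u := by
  obtain ⟨m, hm⟩ := exists_reachesIn_of_reflTransGen h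
  have hne : {n | reachesIn (edge cs) n v u}.Nonempty := ⟨m, hm⟩
  exact Nat.sInf_mem hne

end StmtThree

namespace StmtThree
open CoxeterSystem List
open scoped Classical

variable {B : Type*} {W : Type*} [Group W] {M : CoxeterMatrix B} (cs : CoxeterSystem M W)

lemma reach_down (l : List W) (w : W) (hrefl : ∀ t ∈ l, cs.IsReflection t) :
    ∀ k, k ≤ l.length → (∀ j, j < k → cs.length (vert l w (j+1)) < cs.length (vert l w j)) →
    reachesIn (edge cs) k (vert l w k) (vert l w 0) := by
  intro k
  induction k with
  | zero => intro _ _; exact rfl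
  | succ k ih =>
    intro hk hdown
    have hkl : k < l.length := by omega
    refine ⟨vert l w k, ⟨⟨l[k]'hkl, hrefl _ (List.getElem_mem _), ?_⟩, ?_⟩,
      ih (by omega) (fun j hj => hdown j (by omega))⟩
    · exact vert_succ l w hkl
    · exact hdown k (by omega)

lemma reach_up (l : List W) (w : W) (hrefl : ∀ t ∈ l, cs.IsReflection t) :
    ∀ m k, k + m = l.length →
    (∀ j, k ≤ j → j < l.length → cs.length (vert l w j) < cs.length (vert l w (j+1))) →
    reachesIn (edge cs) m (vert l w k) (vert l w l.length) := by
  intro m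
  induction m with
  | zero =>
    intro k hk _
    have : k = l.length := by omega
    rw [this]
    exact rfl
  | succ m ih =>
    intro k hk hup
    have hkl : k < l.length := by omega
    refine ⟨vert l w (k+1), ⟨⟨l[k]'hkl, hrefl _ (List.getElem_mem _), ?_⟩, ?_⟩,
      ih (k+1) (by omega) (fun j hj hj2 => hup j (by omega) hj2)⟩
    · rw [vert_succ l w hkl, ← mul_assoc, (hrefl _ (List.getElem_mem _)).mul_self, one_mul]
    · exact hup k le_rfl hkl

lemma prod_split (A C : List W) (x y : W) :
    (A ++ x :: y :: C).prod = A.prod * (x * (y * C.prod)) := by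
  rw [List.prod_append, List.prod_cons, List.prod_cons]

lemma vert_low (A C : List W) (x y w : W) {j : ℕ} (hj : j ≤ A.length) :
    vert (A ++ x :: y :: C) w j = (A.drop j).prod * ((x * y) * (C.prod * w)) := by
  unfold vert
  rw [List.drop_append]
  have h0 : j - A.length = 0 := by omega
  rw [h0, List.drop_zero, prod_split]
  group

lemma vert_high (A C : List W) (x y w : W) {j : ℕ} (hj : A.length + 2 ≤ j) :
    vert (A ++ x :: y :: C) w j = (C.drop (j - (A.length + 2))).prod * w := by
  unfold vert
  rw [List.drop_append, List.drop_of_length_le (by omega), List.nil_append]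
  obtain ⟨m, hm⟩ : ∃ m, j - A.length = m + 2 := ⟨j - A.length - 2, by omega⟩
  rw [hm, List.drop_succ_cons, List.drop_succ_cons]
  have : j - (A.length + 2) = m := by omega
  rw [this]

lemma vert_mid (A C : List W) (x y w : W) :
    vert (A ++ x :: y :: C) w (A.length + 1) = y * (C.prod * w) := by
  unfold vert
  rw [List.drop_append, List.drop_of_length_le (by omega), List.nil_append]
  have h1 : A.length + 1 - A.length = 1 := by omega
  rw [h1]
  have h2 : List.drop 1 (x :: y :: C) = y :: C := rfl
  rw [h2, List.prod_cons, mul_assoc]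

lemma surgery_pot_lt (A C : List W) (t r a b w : W) (hab : a * b = t * r)
    (hshort : cs.length (b * (C.prod * w)) + 2
      ≤ cs.length (vert (A ++ t :: r :: C) w (A.length + 1))) :
    pot cs (A ++ a :: b :: C) w < pot cs (A ++ t :: r :: C) w := by
  unfold pot
  have hlen' : (A ++ a :: b :: C).length = (A ++ t :: r :: C).length := by simp
  rw [hlen']
  apply Finset.sum_lt_sum
  · intro j hj
    rcases lt_trichotomy j (A.length + 1) with hj1 | hj1 | hj1
    · have hj' : j ≤ A.length := by omega
      rw [vert_low A C a b w hj', vert_low A C t r w hj', hab]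
    · subst hj1
      rw [vert_mid]
      omega
    · have hj' : A.length + 2 ≤ j := by omega
      rw [vert_high A C a b w hj', vert_high A C t r w hj']
  · refine ⟨A.length + 1, Finset.mem_range.mpr (by simp), ?_⟩
    rw [vert_mid]
    omega

lemma main_up (N : ℕ) :
    ∀ (l : List W) (u w : W), pot cs l w ≤ N → (∀ t ∈ l, cs.IsReflection t) →
      l.prod = u * w⁻¹ → l.length = absLen cs (u * w⁻¹) →
      ∃ v, bruhatLe cs v u ∧ bruhatLe cs v w ∧ al cs v u + al cs v w ≤ l.length := by
  induction N using Nat.strong_induction_on with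
  | _ N IH =>
    intro l u w hpot hrefl hprod hmin
    have hu0 : vert l w 0 = u := by
      unfold vert
      rw [List.drop_zero, hprod]
      group
    by_cases hpeak : ∃ i, i + 1 < l.length ∧
        cs.length (vert l w i) < cs.length (vert l w (i+1)) ∧
        cs.length (vert l w (i+2)) < cs.length (vert l w (i+1))
    · -- peak surgery
      obtain ⟨i, hi, hupi, hdowni⟩ := hpeak
      have hi1 : i < l.length := by omega
      obtain ⟨A, C, t, r, hdec, hAlen, ht, hr⟩ :
          ∃ (A C : List W) (t r : W), l = A ++ t :: r :: C ∧ A.length = i ∧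
            cs.IsReflection t ∧ cs.IsReflection r := by
        refine ⟨l.take i, l.drop (i+2), l[i]'hi1, l[i+1]'hi, ?_, ?_, ?_, ?_⟩
        · have hdrop : l.drop i = l[i]'hi1 :: (l[i+1]'hi) :: l.drop (i+2) := by
            rw [List.drop_eq_getElem_cons hi1, List.drop_eq_getElem_cons hi]
          have hdec2 := congrArg (fun x => l.take i ++ x) hdrop
          rw [List.take_append_drop] at hdec2
          exact hdec2
        · rw [List.length_take]; omega
        · exact hrefl _ (List.getElem_mem _)
        · exact hrefl _ (List.getElem_mem _)
      subst hdec
      subst hAlen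
      have hvi2 : vert (A ++ t :: r :: C) w (A.length + 2) = C.prod * w := by
        rw [vert_high A C t r w (by omega)]
        simp
      have hy : vert (A ++ t :: r :: C) w (A.length + 1) = r * (C.prod * w) := vert_mid A C t r w
      have hvi : vert (A ++ t :: r :: C) w A.length = t * (r * (C.prod * w)) := by
        rw [vert_low A C t r w le_rfl]
        simp [mul_assoc]
      by_cases htr : t = r
      · -- adjacent equal letters: contradicts minimality of the factorization
        exfalso
        have hACprod : (A ++ C).prod = u * w⁻¹ := by
          rw [← hprod, List.prod_append, prod_split, htr]
          have : r * (r * C.prod) = C.prod := by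
            rw [← mul_assoc, hr.mul_self, one_mul]
          rw [this]
        have hle := absLen_le cs (u * w⁻¹) (fun x hx => by
          rcases List.mem_append.mp hx with h | h
          · exact hrefl _ (List.mem_append.mpr (Or.inl h))
          · exact hrefl _ (List.mem_append.mpr (Or.inr
              (List.mem_cons_of_mem _ (List.mem_cons_of_mem _ h))))) hACprod
        have h1 : (A ++ C).length + 2 = (A ++ t :: r :: C).length := by
          simp
          omega
        omega
      · -- genuine peak exchange via Claim E
        have h1 : cs.length (t * (r * (C.prod * w))) < cs.length (r * (C.prod * w)) := by
          rw [← hvi, ← hy]; exact hupi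
        have h2 : cs.length (r * (r * (C.prod * w))) < cs.length (r * (C.prod * w)) := by
          have hrr : r * (r * (C.prod * w)) = C.prod * w := by
            rw [← mul_assoc, hr.mul_self, one_mul]
          rw [hrr]
          have e := hdowni
          rw [hvi2, hy] at e
          exact e
        have hE := claimE cs htr h1 h2 ht hr
        obtain ⟨a, b, ha, hb, hab, hshort⟩ :
            ∃ a b : W, cs.IsReflection a ∧ cs.IsReflection b ∧ a * b = t * r ∧
              cs.length (b * (C.prod * w)) + 2
                ≤ cs.length (vert (A ++ t :: r :: C) w (A.length + 1)) := by
          rcases hE with hE | hE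
          · refine ⟨t * r * t, t, ?_, ht, ?_, ?_⟩
            · have := hr.conj t
              rwa [ht.inv] at this
            · rw [mul_assoc, ht.mul_self, mul_one]
            · rw [hy]
              have : t * r * (r * (C.prod * w)) = t * (C.prod * w) := by
                calc t * r * (r * (C.prod * w)) = t * (r * r) * (C.prod * w) := by group
                  _ = t * (C.prod * w) := by rw [hr.mul_self, mul_one]
              rw [← this]
              exact hE
          · refine ⟨r, r * t * r, hr, ?_, ?_, ?_⟩
            · have := ht.conj r
              rwa [hr.inv] at this
            · calc r * (r * t * r) = (r * r) * t * r := by group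
                _ = t * r := by rw [hr.mul_self, one_mul]
            · rw [hy]
              have : r * t * (r * (C.prod * w)) = (r * t * r) * (C.prod * w) := by group
              rw [← this]
              exact hE
        have hpot' := surgery_pot_lt cs A C t r a b w hab hshort
        have hprod' : (A ++ a :: b :: C).prod = u * w⁻¹ := by
          rw [← hprod, prod_split, prod_split, ← mul_assoc a, hab, mul_assoc t]
        have hrefl' : ∀ x ∈ A ++ a :: b :: C, cs.IsReflection x := by
          intro x hx
          rcases List.mem_append.mp hx with h | h
          · exact hrefl _ (List.mem_append.mpr (Or.inl h))
          · rcases h with _ | ⟨_, h⟩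
            · exact ha
            · rcases h with _ | ⟨_, h⟩
              · exact hb
              · exact hrefl _ (List.mem_append.mpr (Or.inr
                  (List.mem_cons_of_mem _ (List.mem_cons_of_mem _ h))))
        have hlen' : (A ++ a :: b :: C).length = (A ++ t :: r :: C).length := by simp
        obtain ⟨v, hv1, hv2, hv3⟩ := IH (pot cs (A ++ a :: b :: C) w) (by omega)
          (A ++ a :: b :: C) u w le_rfl hrefl' hprod' (by rw [hlen', hmin])
        exact ⟨v, hv1, hv2, by omega⟩
    · -- no peak: the path is V-shaped
      push_neg at hpeak
      set n := l.length with hn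
      have hne : ∀ j, j < n → cs.length (vert l w j) ≠ cs.length (vert l w (j+1)) := by
        intro j hj
        rw [vert_succ l w hj]
        exact (hrefl _ (List.getElem_mem _)).length_mul_right_ne _
      have hex : ∃ j, j = n ∨ (j < n ∧ cs.length (vert l w j) < cs.length (vert l w (j+1))) :=
        ⟨n, Or.inl rfl⟩
      set K := Nat.find hex with hK
      have hKspec := Nat.find_spec hex
      have hKle : K ≤ n := by
        rcases hKspec with h | h
        · omega
        · omega
      have hdowns : ∀ j, j < K → cs.length (vert l w (j+1)) < cs.length (vert l w j) := by
        intro j hj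
        have := Nat.find_min hex hj
        push_neg at this
        have hjn : j < n := by omega
        have := (this.2 hjn)
        have := hne j hjn
        omega
      have hups : ∀ j, K ≤ j → j < n → cs.length (vert l w j) < cs.length (vert l w (j+1)) := by
        intro j hKj
        induction j, hKj using Nat.le_induction with
        | base =>
          intro hKn
          rcases hKspec with h | h
          · omega
          · exact h.2
        | succ j hKj ihj =>
          intro hjn
          have hup_j := ihj (by omega)
          have hle : cs.length (vert l w (j+1)) ≤ cs.length (vert l w (j+2)) :=
            hpeak j (by omega) hup_j
          have hne' : cs.length (vert l w (j+1)) ≠ cs.length (vert l w (j+2)) :=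
            hne (j+1) hjn
          show cs.length (vert l w (j+1)) < cs.length (vert l w (j+2))
          omega
      refine ⟨vert l w K, ?_, ?_, ?_⟩
      · rw [← hu0]
        exact reachesIn_reflTransGen (reach_down cs l w hrefl K hKle hdowns)
      · have h := reachesIn_reflTransGen (reach_up cs l w hrefl (n - K) K (by omega) hups)
        rwa [vert_length l w] at h
      · have b1 : al cs (vert l w K) u ≤ K := by
          rw [← hu0]
          exact al_le cs (reach_down cs l w hrefl K hKle hdowns)
        have b2 : al cs (vert l w K) w ≤ n - K := by
          have := al_le cs (reach_up cs l w hrefl (n - K) K (by omega) hups)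
          rwa [vert_length l w] at this
        omega

end StmtThree


/-- Let `(W,S)` be a Coxeter system whose group `W` is finite. For all
`u, w ∈ W` there exists `v ∈ W` with `v ≤ u`, `v ≤ w` and `al(v,u) + al(v,w) = ℓ′(u w⁻¹)`. -/
theorem exists_meet_with_al_sum {B W : Type*} [Group W] [Finite W] {M : CoxeterMatrix B}
    (cs : CoxeterSystem M W) (u w : W) :
    ∃ v : W, bruhatLe cs v u ∧ bruhatLe cs v w ∧
      al cs v u + al cs v w = absLen cs (u * w⁻¹) := by
  obtain ⟨l, hlen, hrefl, hprod⟩ := StmtThree.absLen_exists_list cs (u * w⁻¹)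
  obtain ⟨v, hv1, hv2, hv3⟩ := StmtThree.main_up cs (StmtThree.pot cs l w) l u w le_rfl
    hrefl hprod (by rw [hlen])
  refine ⟨v, hv1, hv2, ?_⟩
  obtain ⟨l₁, hl₁len, hl₁refl, hl₁⟩ :=
    StmtThree.reachesIn_factor cs (StmtThree.reachesIn_al cs hv1)
  obtain ⟨l₂, hl₂len, hl₂refl, hl₂⟩ :=
    StmtThree.reachesIn_factor cs (StmtThree.reachesIn_al cs hv2)
  have hcat : (l₁ ++ l₂.reverse).prod = u * w⁻¹ := by
    rw [List.prod_append, StmtThree.prod_reverse_of_refl cs hl₂refl, hl₁, hl₂]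
    group
  have hlow := StmtThree.absLen_le cs (u * w⁻¹) (fun t ht => by
      rcases List.mem_append.mp ht with h | h
      · exact hl₁refl t h
      · exact hl₂refl t (List.mem_reverse.mp h)) hcat
  rw [List.length_append, List.length_reverse, hl₁len, hl₂len] at hlow
  omega
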